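/- Let (X_n)_{n≥1} be a sequence of real-valued random variables such that φ(u_k) and φ(v_k) are integrable for every k ≥ 0. Let φ : ℝ → ℝ be a nonnegative nondecreasing convex function with φ(0) = 0 for which there exists a real constant K > 0 such that φ(x + y) ≤ K(φ(x) + φ(y)) for all real x, y. Let χ be a positive nondecreasing function on (0,∞) with χ(b) → ∞ as b → ∞, and let (b_n)_{n≥1} be a nondecreasing unbounded sequence of positive real numbers. If Σ_{k=1}^∞ ( E[φ(u_k)] + E[φ(v_k)] − E[φ(u_{k−1})] − E[φ(v_{k−1})] ) / χ(b_k) < ∞, then φ(S_n)/χ(b_n) → 0 almost surely as n → ∞. -/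

import Mathlib

open MeasureTheory Filter

/-- **Strong law of large numbers for arbitrary random variables**
(Theorem 3.2 of Ndiaye–Lo). Here `S n = Σ_{i=1}^n X_i`, `u n = Σ_{i=1}^n X_i⁺`,
`v n = Σ_{i=1}^n X_i⁻`. -/
theorem slln_arbitrary_random_variables
    {Ω : Type*} [MeasurableSpace Ω] (μ : Measure Ω) [IsProbabilityMeasure μ]
    (X S u v : ℕ → Ω → ℝ)
    (hXmeas : ∀ i, 1 ≤ i → Measurable (X i))
    (hS : ∀ k ω, S k ω = ∑ i ∈ Finset.Icc 1 k, X i ω)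
    (hu : ∀ k ω, u k ω = ∑ i ∈ Finset.Icc 1 k, max (X i ω) 0)
    (hv : ∀ k ω, v k ω = ∑ i ∈ Finset.Icc 1 k, max (-(X i ω)) 0)
    (φ : ℝ → ℝ)
    (hφ_nonneg : ∀ x, 0 ≤ φ x)
    (hφ_mono : Monotone φ)
    (hφ_convex : ConvexOn ℝ Set.univ φ)
    (hφ_zero : φ 0 = 0)
    (K : ℝ) (hK : 0 < K)
    (hφ_subadd : ∀ x y : ℝ, φ (x + y) ≤ K * (φ x + φ y))
    (hu_int : ∀ k, Integrable (fun ω => φ (u k ω)) μ)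
    (hv_int : ∀ k, Integrable (fun ω => φ (v k ω)) μ)
    (χ : ℝ → ℝ)
    (hχ_pos : ∀ b : ℝ, 0 < b → 0 < χ b)
    (hχ_mono : ∀ a b : ℝ, 0 < a → a ≤ b → χ a ≤ χ b)
    (hχ_top : Tendsto χ atTop atTop)
    (b : ℕ → ℝ)
    (hb_pos : ∀ n, 1 ≤ n → 0 < b n)
    (hb_mono : ∀ n, 1 ≤ n → b n ≤ b (n + 1))
    (hb_top : Tendsto b atTop atTop)
    (h_sum : Summable (fun k : ℕ =>
        ((∫ ω, φ (u (k + 1) ω) ∂μ) + (∫ ω, φ (v (k + 1) ω) ∂μ)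
          - (∫ ω, φ (u k ω) ∂μ) - (∫ ω, φ (v k ω) ∂μ)) / χ (b (k + 1)))) :
    ∀ᵐ ω ∂μ, Tendsto (fun n => φ (S n ω) / χ (b n)) atTop (nhds 0) := by
  classical
  -- the key auxiliary process and its normalized increments
  set T : ℕ → Ω → ℝ := fun k ω => φ (u k ω) + φ (v k ω) with hT
  set Y : ℕ → Ω → ℝ := fun k ω => (T (k + 1) ω - T k ω) / χ (b (k + 1)) with hY
  -- monotonicity of b along ℕ
  have hb_mono' : ∀ m n : ℕ, 1 ≤ m → m ≤ n → b m ≤ b n := by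
    intro m n hm hmn
    induction n with
    | zero => omega
    | succ n ih =>
      rcases Nat.lt_or_ge m (n + 1) with h | h
      · have hn : 1 ≤ n := by omega
        exact le_trans (ih (by omega)) (hb_mono n hn)
      · have : m = n + 1 := by omega
        subst this; exact le_rfl
  have hχb_pos : ∀ n : ℕ, 1 ≤ n → 0 < χ (b n) := fun n hn => hχ_pos _ (hb_pos n hn)
  -- successor formulas and monotonicity of u, v, T in the index
  have hu_succ : ∀ k ω, u (k + 1) ω = u k ω + max (X (k + 1) ω) 0 := by
    intro k ω
    rw [hu, hu]
    exact Finset.sum_Icc_succ_top (Nat.succ_le_succ (Nat.zero_le k)) _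
  have hv_succ : ∀ k ω, v (k + 1) ω = v k ω + max (-(X (k + 1) ω)) 0 := by
    intro k ω
    rw [hv, hv]
    exact Finset.sum_Icc_succ_top (Nat.succ_le_succ (Nat.zero_le k)) _
  have hT_mono : ∀ k ω, T k ω ≤ T (k + 1) ω := by
    intro k ω
    have h1 : u k ω ≤ u (k + 1) ω := by
      rw [hu_succ]; nlinarith [le_max_right (X (k + 1) ω) (0 : ℝ)]
    have h2 : v k ω ≤ v (k + 1) ω := by
      rw [hv_succ]; nlinarith [le_max_right (-(X (k + 1) ω)) (0 : ℝ)]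
    exact add_le_add (hφ_mono h1) (hφ_mono h2)
  have hY_nonneg : ∀ k ω, 0 ≤ Y k ω := fun k ω =>
    div_nonneg (sub_nonneg.2 (hT_mono k ω)) (hχb_pos (k + 1) (by omega)).le
  -- integrability and integral of Y
  have hT_int : ∀ k, Integrable (T k) μ := fun k => (hu_int k).add (hv_int k)
  have hY_int : ∀ k, Integrable (Y k) μ := fun k =>
    (((hT_int (k + 1)).sub (hT_int k)).div_const _)
  have hY_integral : ∀ k, ∫ ω, Y k ω ∂μ =
      ((∫ ω, φ (u (k + 1) ω) ∂μ) + (∫ ω, φ (v (k + 1) ω) ∂μ)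
        - (∫ ω, φ (u k ω) ∂μ) - (∫ ω, φ (v k ω) ∂μ)) / χ (b (k + 1)) := by
    intro k
    simp only [hY]
    rw [integral_div, integral_sub (hT_int (k + 1)) (hT_int k)]
    simp only [hT]
    rw [integral_add (hu_int (k + 1)) (hv_int (k + 1)), integral_add (hu_int k) (hv_int k)]
    ring
  have h_sum' : Summable (fun k => ∫ ω, Y k ω ∂μ) :=
    h_sum.congr fun k => (hY_integral k).symm
  -- from summability of expectations to a.e. summability
  have h_ae : ∀ᵐ ω ∂μ, Summable fun k => Y k ω := by
    have hmeas : ∀ k : ℕ, AEMeasurable (fun ω => ENNReal.ofReal (Y k ω)) μ := fun k =>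
      ENNReal.measurable_ofReal.comp_aemeasurable (hY_int k).aemeasurable
    have hlint : ∀ k : ℕ, ∫⁻ ω, ENNReal.ofReal (Y k ω) ∂μ = ENNReal.ofReal (∫ ω, Y k ω ∂μ) :=
      fun k => (ofReal_integral_eq_lintegral_ofReal (hY_int k)
        (Filter.Eventually.of_forall (hY_nonneg k))).symm
    have hfin : ∫⁻ ω, ∑' k, ENNReal.ofReal (Y k ω) ∂μ ≠ ⊤ := by
      rw [lintegral_tsum hmeas]
      simp only [hlint]
      rw [← ENNReal.ofReal_tsum_of_nonneg (fun k => integral_nonneg (hY_nonneg k)) h_sum']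
      exact ENNReal.ofReal_ne_top
    filter_upwards [ae_lt_top' (AEMeasurable.ennreal_tsum hmeas) hfin] with ω hω
    have hsum := ENNReal.summable_toReal hω.ne
    refine hsum.congr fun k => ?_
    exact ENNReal.toReal_ofReal (hY_nonneg k ω)
  -- the pointwise convergence
  filter_upwards [h_ae] with ω hsum
  set c : ℝ := ∑' k, Y k ω with hc
  have hP : Tendsto (fun m => ∑ k ∈ Finset.range m, Y k ω) atTop (nhds c) :=
    hsum.hasSum.tendsto_sum_nat
  -- key increment bound: for 1 ≤ n and m ≤ n,
  --   T n ω ≤ T m ω + χ (b n) * (c - ∑_{k<m} Y k ω)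
  have hkey : ∀ m n : ℕ, 1 ≤ n → m ≤ n →
      T n ω ≤ T m ω + χ (b n) * (c - ∑ k ∈ Finset.range m, Y k ω) := by
    intro m n hn hmn
    have htel : T n ω - T m ω = ∑ k ∈ Finset.Ico m n, (T (k + 1) ω - T k ω) := by
      rw [Finset.sum_Ico_eq_sub _ hmn, Finset.sum_range_sub (fun k => T k ω),
        Finset.sum_range_sub (fun k => T k ω)]
      ring
    have hstep : ∀ k ∈ Finset.Ico m n, T (k + 1) ω - T k ω ≤ Y k ω * χ (b n) := by
      intro k hk
      rw [Finset.mem_Ico] at hk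
      have hkn : k + 1 ≤ n := hk.2
      have h1 : χ (b (k + 1)) ≤ χ (b n) :=
        hχ_mono _ _ (hb_pos _ (by omega)) (hb_mono' (k + 1) n (by omega) hkn)
      have h2 : T (k + 1) ω - T k ω = Y k ω * χ (b (k + 1)) := by
        simp only [hY]
        exact (div_mul_cancel₀ _ (hχb_pos (k + 1) (by omega)).ne').symm
      rw [h2]
      exact mul_le_mul_of_nonneg_left h1 (hY_nonneg k ω)
    have hIco : ∑ k ∈ Finset.Ico m n, Y k ω ≤ c - ∑ k ∈ Finset.range m, Y k ω := by
      have h1 : ∑ k ∈ Finset.range m, Y k ω + ∑ k ∈ Finset.Ico m n, Y k ω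
          = ∑ k ∈ Finset.range n, Y k ω := by
        rw [Finset.range_eq_Ico, Finset.range_eq_Ico]
        exact Finset.sum_Ico_consecutive (fun k => Y k ω) (Nat.zero_le m) hmn
      have h2 : ∑ k ∈ Finset.range n, Y k ω ≤ c :=
        Summable.sum_le_tsum _ (fun k _ => hY_nonneg k ω) hsum
      linarith
    have hχn : (0:ℝ) ≤ χ (b n) := (hχb_pos n hn).le
    calc T n ω = T m ω + (T n ω - T m ω) := by ring
      _ ≤ T m ω + ∑ k ∈ Finset.Ico m n, Y k ω * χ (b n) := by
          rw [htel]; exact add_le_add (le_refl _) (Finset.sum_le_sum hstep)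
      _ = T m ω + (∑ k ∈ Finset.Ico m n, Y k ω) * χ (b n) := by
          rw [Finset.sum_mul]
      _ ≤ T m ω + (c - ∑ k ∈ Finset.range m, Y k ω) * χ (b n) := by
          gcongr
      _ = T m ω + χ (b n) * (c - ∑ k ∈ Finset.range m, Y k ω) := by ring
  -- finish via ε argument
  rw [Metric.tendsto_atTop]
  intro ε hε
  -- choose m with small tail
  have htail : Tendsto (fun m => c - ∑ k ∈ Finset.range m, Y k ω) atTop (nhds 0) := by
    have := (tendsto_const_nhds (x := c) (f := atTop (α := ℕ))).sub hP
    simpa using this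
  obtain ⟨m, hm⟩ := (htail.eventually (gt_mem_nhds (by linarith : (0:ℝ) < ε / 2))).exists
  -- choose N with T m ω / χ (b n) small
  have hχbn_top : Tendsto (fun n => χ (b n)) atTop atTop := hχ_top.comp hb_top
  have hTm : Tendsto (fun n => T m ω / χ (b n)) atTop (nhds 0) :=
    Tendsto.div_atTop tendsto_const_nhds hχbn_top
  obtain ⟨N, hN⟩ := (Metric.tendsto_atTop.1 hTm (ε / 2) (by linarith)).imp (fun N h => h)
  refine ⟨max (max N m) 1, fun n hn => ?_⟩
  have hn1 : 1 ≤ n := le_trans (le_max_right _ _) hn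
  have hnN : N ≤ n := le_trans (le_trans (le_max_left _ _) (le_max_left _ _)) hn
  have hnm : m ≤ n := le_trans (le_trans (le_max_right _ _) (le_max_left _ _)) hn
  have hχn : 0 < χ (b n) := hχb_pos n hn1
  have hSu : φ (S n ω) ≤ T n ω := by
    have h1 : S n ω ≤ u n ω := by
      rw [hS, hu]
      exact Finset.sum_le_sum fun i _ => le_max_left _ _
    have := hφ_mono h1
    have h2 := hφ_nonneg (v n ω)
    simp only [hT]; linarith
  have hb1 : φ (S n ω) / χ (b n) ≤ T n ω / χ (b n) :=
    (div_le_div_iff_of_pos_right hχn).2 hSu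
  have hb2 : T n ω / χ (b n) ≤ T m ω / χ (b n) + (c - ∑ k ∈ Finset.range m, Y k ω) := by
    have h := (div_le_div_iff_of_pos_right hχn).2 (hkey m n hn1 hnm)
    have heq : (T m ω + χ (b n) * (c - ∑ k ∈ Finset.range m, Y k ω)) / χ (b n)
        = T m ω / χ (b n) + (c - ∑ k ∈ Finset.range m, Y k ω) := by
      field_simp
    rw [heq] at h
    exact h
  have hb3 : T m ω / χ (b n) < ε / 2 := by
    have h := hN n hnN
    rw [Real.dist_eq, sub_zero] at h
    exact lt_of_le_of_lt (le_abs_self _) h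
  have hnonneg : 0 ≤ φ (S n ω) / χ (b n) := div_nonneg (hφ_nonneg _) hχn.le
  rw [Real.dist_eq, sub_zero, abs_of_nonneg hnonneg]
  calc φ (S n ω) / χ (b n) ≤ T n ω / χ (b n) := hb1
    _ ≤ T m ω / χ (b n) + (c - ∑ k ∈ Finset.range m, Y k ω) := hb2
    _ < ε / 2 + ε / 2 := add_lt_add hb3 hm
    _ = ε := by ring
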